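/- The canonical model order is locally linear: for complete types Φ,Ψ,Θ (with Φ≤Ψ meaning Φ⁻⊆Ψ⁻ and Φ⁺⊇Ψ⁺), if Φ≤Ψ and Φ≤Θ then Ψ and Θ are comparable, and if Ψ≤Φ and Θ≤Φ then Ψ and Θ are comparable. -/
import Mathlib


/-- Formulas of the Gödel temporal language. -/
inductive GF where
  | var : Nat → GF
  | and : GF → GF → GF
  | or : GF → GF → GF
  | imp : GF → GF → GF
  | coimp : GF → GF → GF
  | next : GF → GF
  | dia : GF → GF
  | box : GF → GF
deriving DecidableEq

/-- ⊥ := p ⇐ p -/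
def GF.bot : GF := .coimp (.var 0) (.var 0)
/-- ⊤ := p ⇒ p -/
def GF.top : GF := .imp (.var 0) (.var 0)
/-- ¬φ := φ ⇒ ⊥ -/
def GF.neg (φ : GF) : GF := .imp φ .bot
/-- φ ⟺ ψ := (φ⇒ψ) ∧ (ψ⇒φ) -/
def GF.iffF (φ ψ : GF) : GF := .and (.imp φ ψ) (.imp ψ φ)

/-- The deductive calculus GTL. Intuitionistic tautologies are generated by a
standard Hilbert-style axiomatization of intuitionistic propositional logic. -/
inductive GTL : GF → Prop where
  -- intuitionistic axioms
  | i1 (φ ψ : GF) : GTL (.imp φ (.imp ψ φ))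
  | i2 (φ ψ χ : GF) : GTL (.imp (.imp φ (.imp ψ χ)) (.imp (.imp φ ψ) (.imp φ χ)))
  | i3 (φ ψ : GF) : GTL (.imp (.and φ ψ) φ)
  | i4 (φ ψ : GF) : GTL (.imp (.and φ ψ) ψ)
  | i5 (φ ψ : GF) : GTL (.imp φ (.imp ψ (.and φ ψ)))
  | i6 (φ ψ : GF) : GTL (.imp φ (.or φ ψ))
  | i7 (φ ψ : GF) : GTL (.imp ψ (.or φ ψ))
  | i8 (φ ψ χ : GF) : GTL (.imp (.imp φ χ) (.imp (.imp ψ χ) (.imp (.or φ ψ) χ)))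
  | i9 (φ : GF) : GTL (.imp .bot φ)
  -- H-B axioms and rules
  | hb1 (φ ψ : GF) : GTL (.imp φ (.or ψ (.coimp φ ψ)))
  | hbMon {φ ψ : GF} (θ : GF) : GTL (.imp φ ψ) → GTL (.imp (.coimp φ θ) (.coimp ψ θ))
  | hbDis {φ ψ γ : GF} : GTL (.imp φ (.or ψ γ)) → GTL (.imp (.coimp φ ψ) γ)
  -- linearity axioms
  | lin (φ ψ : GF) : GTL (.or (.imp φ ψ) (.imp ψ φ))
  | colin (φ ψ : GF) : GTL (GF.neg (.and (.coimp φ ψ) (.coimp ψ φ)))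
  -- temporal axioms
  | nBot : GTL (GF.neg (.next .bot))
  | nOr (φ ψ : GF) : GTL (.imp (.next (.or φ ψ)) (.or (.next φ) (.next ψ)))
  | nAnd (φ ψ : GF) : GTL (.imp (.and (.next φ) (.next ψ)) (.next (.and φ ψ)))
  | nImp (φ ψ : GF) : GTL (GF.iffF (.next (.imp φ ψ)) (.imp (.next φ) (.next ψ)))
  | kBox (φ ψ : GF) : GTL (.imp (.box (.imp φ ψ)) (.imp (.box φ) (.box ψ)))
  | kDia (φ ψ : GF) : GTL (.imp (.box (.imp φ ψ)) (.imp (.dia φ) (.dia ψ)))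
  | boxFix (φ : GF) : GTL (.imp (.box φ) (.and φ (.next (.box φ))))
  | diaFix (φ : GF) : GTL (.imp (.or φ (.next (.dia φ))) (.dia φ))
  | indBox (φ : GF) : GTL (.imp (.box (.imp φ (.next φ))) (.imp φ (.box φ)))
  | indDia (φ : GF) : GTL (.imp (.box (.imp (.next φ) φ)) (.imp (.dia φ) φ))
  -- back–up confluence axiom
  | backup (φ ψ : GF) : GTL (.imp (.next (.coimp φ ψ)) (.coimp (.next φ) (.next ψ)))
  -- standard modal rules
  | mp {φ ψ : GF} : GTL φ → GTL (.imp φ ψ) → GTL ψ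
  | necN {φ : GF} : GTL φ → GTL (.next φ)
  | necBox {φ : GF} : GTL φ → GTL (.box φ)

/-- Finite conjunction (⋀∅ = ⊤). -/
def GF.conj : List GF → GF := fun l => l.foldr .and .top
/-- Finite disjunction (⋁∅ = ⊥). -/
def GF.disj : List GF → GF := fun l => l.foldr .or .bot

/-- Gentzen-style consequence: Γ ⊢ Δ iff ⋀Γ' ⇒ ⋁Δ' ∈ GTL for some finite
Γ' ⊆ Γ, Δ' ⊆ Δ. -/
def GSeq (Γ Δ : Set GF) : Prop :=
  ∃ l m : List GF, (∀ φ ∈ l, φ ∈ Γ) ∧ (∀ φ ∈ m, φ ∈ Δ) ∧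
    GTL (.imp (GF.conj l) (GF.disj m))

/-- A complete type: a consistent saturated pair. -/
def CompleteType (P N : Set GF) : Prop :=
  ¬ GSeq P N ∧ ∀ φ : GF, φ ∈ P ∨ φ ∈ N

/-- The canonical order: Φ ≤ Ψ iff Φ⁻ ⊆ Ψ⁻ and Φ⁺ ⊇ Ψ⁺. -/
def TLe (Φ Ψ : Set GF × Set GF) : Prop := Φ.2 ⊆ Ψ.2 ∧ Ψ.1 ⊆ Φ.1

/-- The canonical successor: S(Φ) = (⊖Φ⁺, ⊖Φ⁻). -/
def TSucc (Φ : Set GF × Set GF) : Set GF × Set GF :=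
  ({φ | GF.next φ ∈ Φ.1}, {φ | GF.next φ ∈ Φ.2})

section Helpers

lemma gtl_comp {a b c : GF} (h1 : GTL (.imp a b)) (h2 : GTL (.imp b c)) :
    GTL (.imp a c) :=
  GTL.mp h1 (GTL.mp (GTL.mp h2 (GTL.i1 _ a)) (GTL.i2 a b c))

lemma gtl_s {a b c : GF} (h : GTL (.imp a (.imp b c))) (h2 : GTL (.imp a b)) :
    GTL (.imp a c) :=
  GTL.mp h2 (GTL.mp h (GTL.i2 a b c))

lemma gtl_andI {a b c : GF} (h1 : GTL (.imp c a)) (h2 : GTL (.imp c b)) :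
    GTL (.imp c (.and a b)) :=
  gtl_s (gtl_comp h1 (GTL.i5 a b)) h2

/-- A formula in both sides yields an inconsistency. -/
lemma gseq_mem_both {P N : Set GF} {χ : GF} (hp : χ ∈ P) (hn : χ ∈ N) :
    GSeq P N := by
  refine ⟨[χ], [χ], by simpa using hp, by simpa using hn, ?_⟩
  show GTL (.imp (.and χ .top) (.or χ .bot))
  exact gtl_comp (GTL.i3 χ .top) (GTL.i6 χ .bot)

/-- φ, φ⇒ψ ∈ P and ψ ∈ N is inconsistent. -/
lemma gseq_imp_pos {P N : Set GF} {φ ψ : GF} (h1 : φ ∈ P) (h2 : GF.imp φ ψ ∈ P)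
    (h3 : ψ ∈ N) : GSeq P N := by
  refine ⟨[.imp φ ψ, φ], [ψ], ?_, by simpa using h3, ?_⟩
  · intro χ hχ; simp at hχ; rcases hχ with h | h <;> simp [h, h1, h2]
  · show GTL (.imp (.and (.imp φ ψ) (.and φ .top)) (.or ψ .bot))
    refine gtl_comp (gtl_s (GTL.i3 _ _) ?_) (GTL.i6 ψ .bot)
    exact gtl_comp (GTL.i4 _ _) (GTL.i3 φ .top)

/-- φ ∈ P and ψ, φ⇐ψ ∈ N is inconsistent (via hb1). -/
lemma gseq_coimp_neg {P N : Set GF} {φ ψ : GF} (h1 : φ ∈ P) (h2 : ψ ∈ N)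
    (h3 : GF.coimp φ ψ ∈ N) : GSeq P N := by
  refine ⟨[φ], [ψ, .coimp φ ψ], by simpa using h1, ?_, ?_⟩
  · intro χ hχ; simp at hχ; rcases hχ with h | h <;> simp [h, h2, h3]
  · show GTL (.imp (.and φ .top) (.or ψ (.or (.coimp φ ψ) .bot)))
    refine gtl_comp (GTL.i3 φ .top) (gtl_comp (GTL.hb1 φ ψ) ?_)
    have c1 : GTL (.imp ψ (.or ψ (.or (.coimp φ ψ) .bot))) := GTL.i6 _ _
    have c2 : GTL (.imp (.coimp φ ψ) (.or ψ (.or (.coimp φ ψ) .bot))) :=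
      gtl_comp (GTL.i6 _ .bot) (GTL.i7 ψ _)
    exact GTL.mp c2 (GTL.mp c1 (GTL.i8 _ _ _))

/-- φ⇐ψ, ψ⇐φ ∈ P is inconsistent (colin). -/
lemma gseq_colin {P N : Set GF} {φ ψ : GF} (h1 : GF.coimp φ ψ ∈ P)
    (h2 : GF.coimp ψ φ ∈ P) : GSeq P N := by
  refine ⟨[.coimp φ ψ, .coimp ψ φ], [], ?_, by simp, ?_⟩
  · intro χ hχ; simp at hχ; rcases hχ with h | h <;> simp [h, h1, h2]
  · show GTL (.imp (.and (.coimp φ ψ) (.and (.coimp ψ φ) .top)) (GF.disj []))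
    refine gtl_comp (gtl_andI (GTL.i3 _ _) (gtl_comp (GTL.i4 _ _) (GTL.i3 _ _))) ?_
    exact GTL.colin φ ψ

/-- φ⇒ψ, ψ⇒φ ∈ N is inconsistent (lin). -/
lemma gseq_lin {P N : Set GF} {φ ψ : GF} (h1 : GF.imp φ ψ ∈ N)
    (h2 : GF.imp ψ φ ∈ N) : GSeq P N := by
  refine ⟨[], [.imp φ ψ, .imp ψ φ], by simp, ?_, ?_⟩
  · intro χ hχ; simp at hχ; rcases hχ with h | h <;> simp [h, h1, h2]
  · show GTL (.imp (GF.conj []) (.or (.imp φ ψ) (.or (.imp ψ φ) .bot)))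
    have c1 : GTL (.imp (.imp φ ψ) (.or (.imp φ ψ) (.or (.imp ψ φ) .bot))) :=
      GTL.i6 _ _
    have c2 : GTL (.imp (.imp ψ φ) (.or (.imp φ ψ) (.or (.imp ψ φ) .bot))) :=
      gtl_comp (GTL.i6 _ .bot) (GTL.i7 _ _)
    have := GTL.mp (GTL.lin φ ψ) (GTL.mp c2 (GTL.mp c1 (GTL.i8 _ _ _)))
    exact GTL.mp this (GTL.i1 _ _)

/-- From incomparability, extract a witness. -/
lemma not_TLe_witness {Ψ Θ : Set GF × Set GF} (hΨ : CompleteType Ψ.1 Ψ.2)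
    (hΘ : CompleteType Θ.1 Θ.2) (h : ¬ TLe Ψ Θ) :
    ∃ φ, φ ∈ Ψ.2 ∧ φ ∈ Θ.1 := by
  rw [TLe, not_and_or] at h
  rcases h with h | h
  · rw [Set.not_subset] at h
    obtain ⟨φ, h1, h2⟩ := h
    exact ⟨φ, h1, (hΘ.2 φ).resolve_right h2⟩
  · rw [Set.not_subset] at h
    obtain ⟨φ, h1, h2⟩ := h
    exact ⟨φ, (hΨ.2 φ).resolve_left h2, h1⟩

end Helpers

/-- The canonical order on complete types is locally linear. -/
theorem stmt15 (Φ Ψ Θ : Set GF × Set GF)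
    (hΦ : CompleteType Φ.1 Φ.2) (hΨ : CompleteType Ψ.1 Ψ.2)
    (hΘ : CompleteType Θ.1 Θ.2) :
    (TLe Φ Ψ → TLe Φ Θ → TLe Ψ Θ ∨ TLe Θ Ψ) ∧
    (TLe Ψ Φ → TLe Θ Φ → TLe Ψ Θ ∨ TLe Θ Ψ) := by
  constructor
  · intro h1 h2
    by_contra hc
    push_neg at hc
    obtain ⟨φ, hφΨ, hφΘ⟩ := not_TLe_witness hΨ hΘ hc.1
    obtain ⟨ψ, hψΘ, hψΨ⟩ := not_TLe_witness hΘ hΨ hc.2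
    -- coimp φ ψ ∈ Θ⁺
    have hcΘ : GF.coimp φ ψ ∈ Θ.1 := by
      rcases hΘ.2 (.coimp φ ψ) with h | h
      · exact h
      · exact absurd (gseq_coimp_neg hφΘ hψΘ h) hΘ.1
    -- coimp ψ φ ∈ Ψ⁺
    have hcΨ : GF.coimp ψ φ ∈ Ψ.1 := by
      rcases hΨ.2 (.coimp ψ φ) with h | h
      · exact h
      · exact absurd (gseq_coimp_neg hψΨ hφΨ h) hΨ.1
    -- both coimps ∈ Φ⁺
    have hcΦ1 : GF.coimp φ ψ ∈ Φ.1 := by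
      rcases hΦ.2 (.coimp φ ψ) with h | h
      · exact h
      · exact absurd (gseq_mem_both hcΘ (h2.1 h)) hΘ.1
    have hcΦ2 : GF.coimp ψ φ ∈ Φ.1 := by
      rcases hΦ.2 (.coimp ψ φ) with h | h
      · exact h
      · exact absurd (gseq_mem_both hcΨ (h1.1 h)) hΨ.1
    exact absurd (gseq_colin hcΦ1 hcΦ2) hΦ.1
  · intro h1 h2
    by_contra hc
    push_neg at hc
    obtain ⟨φ, hφΨ, hφΘ⟩ := not_TLe_witness hΨ hΘ hc.1
    obtain ⟨ψ, hψΘ, hψΨ⟩ := not_TLe_witness hΘ hΨ hc.2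
    have hiΘ : GF.imp φ ψ ∈ Θ.2 := by
      rcases hΘ.2 (.imp φ ψ) with h | h
      · exact absurd (gseq_imp_pos hφΘ h hψΘ) hΘ.1
      · exact h
    have hiΨ : GF.imp ψ φ ∈ Ψ.2 := by
      rcases hΨ.2 (.imp ψ φ) with h | h
      · exact absurd (gseq_imp_pos hψΨ h hφΨ) hΨ.1
      · exact h
    exact absurd (gseq_lin (h2.1 hiΘ) (h1.1 hiΨ)) hΦ.1
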